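/- For K=4 goods, a valuation v of 'Case 2' type with pairwise penalties δ_{ij}=δ_{jk}=δ_{kl}=δ_{il}=a, δ_{ik}=b, δ_{jl}=c, where 0 < a < min{b,c}, is not an assignment valuation: there is no weight matrix W such that v(A) equals the maximum weight matching value of A for all bundles A. -/
import Mathlib


/-- `AssignVal n W A r` says that `r` is the maximum total weight over all ways to
assign the goods in `A` injectively to the `n` buyers (not all goods need be
assigned; unassigned buyers contribute `0`), with weight matrix `W`. -/
def AssignVal (n : ℕ) (W : Fin n → Fin 4 → ℝ) (A : Finset (Fin 4)) (r : ℝ) : Prop :=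
  IsGreatest {s : ℝ | ∃ σ : Fin n → Option (Fin 4),
    (∀ (b : Fin n) (x : Fin 4), σ b = some x → x ∈ A) ∧
    (∀ (b b' : Fin n) (x : Fin 4), σ b = some x → σ b' = some x → b = b') ∧
    s = ∑ b : Fin n, (σ b).elim 0 (W b)} r

private lemma sum_support_single {n : ℕ} (f : Fin n → ℝ) (b : Fin n)
    (h : ∀ t, t ≠ b → f t = 0) : ∑ t, f t = f b :=
  Finset.sum_eq_single b (fun t _ ht => h t ht) (fun ht => absurd (Finset.mem_univ b) ht)

private lemma sum_support_pair {n : ℕ} (f : Fin n → ℝ) (b b' : Fin n) (hbb : b ≠ b')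
    (h : ∀ t, t ≠ b → t ≠ b' → f t = 0) : ∑ t, f t = f b + f b' := by
  rw [← Finset.sum_pair hbb]
  refine (Finset.sum_subset (Finset.subset_univ _) (fun t _ ht => ?_)).symm
  simp only [Finset.mem_insert, Finset.mem_singleton] at ht
  push_neg at ht
  exact h t ht.1 ht.2

private lemma minmax (p q r s : ℝ) : p + r - max (p + s) (r + q) = min (r - s) (p - q) := by
  rcases le_total (p + s) (r + q) with h | h
  · rw [max_eq_right h, min_eq_right (by linarith)]; ring
  · rw [max_eq_left h, min_eq_left (by linarith)]; ring

theorem case2_not_assignment_valuation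
    (v : Finset (Fin 4) → ℝ) (hv0 : v ∅ = 0)
    (i j k l : Fin 4)
    (hij : i ≠ j) (hik : i ≠ k) (hil : i ≠ l) (hjk : j ≠ k) (hjl : j ≠ l) (hkl : k ≠ l)
    (a b c : ℝ)
    (hdij : v {i} + v {j} - v {i, j} = a)
    (hdjk : v {j} + v {k} - v {j, k} = a)
    (hdkl : v {k} + v {l} - v {k, l} = a)
    (hdil : v {i} + v {l} - v {i, l} = a)
    (hdik : v {i} + v {k} - v {i, k} = b)
    (hdjl : v {j} + v {l} - v {j, l} = c)
    (ha : 0 < a) (hab : a < b) (hac : a < c) :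
    ¬ ∃ (n : ℕ) (W : Fin n → Fin 4 → ℝ),
        (∀ (bu : Fin n) (g : Fin 4), 0 ≤ W bu g) ∧
        ∀ A : Finset (Fin 4), AssignVal n W A (v A) := by
  rintro ⟨n, W, hW, hA⟩
  have hub : ∀ (A : Finset (Fin 4)) (s : ℝ),
      (∃ σ : Fin n → Option (Fin 4),
        (∀ (b : Fin n) (x : Fin 4), σ b = some x → x ∈ A) ∧
        (∀ (b b' : Fin n) (x : Fin 4), σ b = some x → σ b' = some x → b = b') ∧
        s = ∑ b : Fin n, (σ b).elim 0 (W b)) → s ≤ v A :=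
    fun A s hs => (hA A).2 hs
  -- single good lower bound
  have hsingle_ub : ∀ (t : Fin n) (x : Fin 4), W t x ≤ v {x} := by
    intro t x
    refine hub {x} (W t x) ⟨fun u => if u = t then some x else none, ?_, ?_, ?_⟩
    · intro u z h
      by_cases hu : u = t
      · simp only [if_pos hu] at h
        simp only [Option.some.injEq] at h
        simp [← h]
      · simp [if_neg hu] at h
    · intro u u' z h h'
      by_cases hu : u = t
      · by_cases hu' : u' = t
        · rw [hu, hu']
        · simp [if_neg hu'] at h'
      · simp [if_neg hu] at h
    · rw [sum_support_single _ t (fun u hu => by simp [if_neg hu])]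
      simp
  -- pair lower bound
  have hpair_lb : ∀ (t t' : Fin n) (x y : Fin 4), t ≠ t' → x ≠ y →
      W t x + W t' y ≤ v {x, y} := by
    intro t t' x y htt hxy
    have key : ∀ u z, (if u = t then some x else if u = t' then some y else none) = some z →
        (u = t ∧ z = x) ∨ (u = t' ∧ z = y) := by
      intro u z h
      by_cases hu : u = t
      · left
        simp only [if_pos hu, Option.some.injEq] at h
        exact ⟨hu, h.symm⟩
      · by_cases hu' : u = t'
        · right
          simp only [if_neg hu, if_pos hu', Option.some.injEq] at h
          exact ⟨hu', h.symm⟩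
        · simp [if_neg hu, if_neg hu'] at h
    refine hub {x, y} _ ⟨fun u => if u = t then some x else if u = t' then some y else none,
      ?_, ?_, ?_⟩
    · intro u z h
      rcases key u z h with ⟨_, rfl⟩ | ⟨_, rfl⟩ <;> simp
    · intro u u' z h h'
      rcases key u z h with ⟨hu, hz1⟩ | ⟨hu, hz1⟩ <;>
        rcases key u' z h' with ⟨hu', hz2⟩ | ⟨hu', hz2⟩
      · rw [hu, hu']
      · exact absurd (hz1.symm.trans hz2) hxy
      · exact absurd (hz1.symm.trans hz2) (Ne.symm hxy)
      · rw [hu, hu']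
    · rw [sum_support_pair _ t t' htt (fun u hu hu' => by simp [if_neg hu, if_neg hu'])]
      simp [htt, if_neg (Ne.symm htt)]
  have h0le : ∀ A, (0:ℝ) ≤ v A :=
    fun A => hub A 0 ⟨fun _ => none, by simp, by simp, by simp⟩
  have hmono : ∀ x y : Fin 4, v {x} ≤ v {x, y} := by
    intro x y
    obtain ⟨σ, h1, h2, h3⟩ := (hA {x}).1
    refine hub {x, y} _ ⟨σ, fun t z h => ?_, h2, h3⟩
    have := h1 t z h
    simp only [Finset.mem_singleton] at this
    simp [this]
  have hreal_single : ∀ x : Fin 4, v {x} = 0 ∨ ∃ t, v {x} = W t x := by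
    intro x
    obtain ⟨σ, h1, h2, h3⟩ := (hA {x}).1
    by_cases hx : ∃ t, σ t = some x
    · obtain ⟨tx, htx⟩ := hx
      have hz : ∀ t, t ≠ tx → σ t = none := by
        intro t ht
        cases hσt : σ t with
        | none => rfl
        | some z =>
          have hzx : z = x := by have := h1 t z hσt; simpa using this
          exact absurd (h2 t tx x (hzx ▸ hσt) htx) ht
      right
      exact ⟨tx, by rw [h3, sum_support_single _ tx (fun t ht => by rw [hz t ht]; rfl), htx]; simp⟩
    · push_neg at hx
      left
      have hz : ∀ t, σ t = none := by
        intro t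
        cases hσt : σ t with
        | none => rfl
        | some z =>
          have hzx : z = x := by have := h1 t z hσt; simpa using this
          exact absurd (hzx ▸ hσt) (hx t)
      rw [h3]
      simp [hz]
  -- positivity of singletons
  have hb : 0 < b := lt_trans ha hab
  have hmji : v {j} ≤ v {i, j} := by rw [Finset.pair_comm]; exact hmono j i
  have hmkj : v {k} ≤ v {j, k} := by rw [Finset.pair_comm]; exact hmono k j
  have hmlk : v {l} ≤ v {k, l} := by rw [Finset.pair_comm]; exact hmono l k
  have hvi : 0 < v {i} := by linarith
  have hvj : 0 < v {j} := by linarith [hmono i j]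
  have hvk : 0 < v {k} := by linarith [hmono j k]
  have hvl : 0 < v {l} := by linarith [hmono k l]
  -- the common unique argmax row b0
  obtain hi0 | ⟨b0, hb0⟩ := hreal_single i
  · linarith
  have hWmax : ∀ x : Fin 4, i ≠ x → 0 < v {i} + v {x} - v {i, x} → W b0 x = v {x} := by
    intro x hix hpos
    obtain hx0 | ⟨tx, htx⟩ := hreal_single x
    · exfalso
      have h2 : v {i} ≤ v {i, x} := hmono i x
      linarith
    by_cases htx0 : tx = b0
    · rw [← htx0]; exact htx.symm
    · exfalso
      have := hpair_lb b0 tx i x (fun h => htx0 h.symm) hix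
      rw [← hb0, ← htx] at this
      linarith
  have hWi : W b0 i = v {i} := hb0.symm
  have hWj : W b0 j = v {j} := hWmax j hij (by linarith)
  have hWk : W b0 k = v {k} := hWmax k hik (by linarith)
  have hWl : W b0 l = v {l} := hWmax l hil (by linarith)
  -- second-best values
  set S : Fin 4 → NNReal :=
    fun x => (Finset.univ.erase b0).sup (fun t => Real.toNNReal (W t x)) with hS
  have hS0 : ∀ x, (0:ℝ) ≤ (S x : ℝ) := fun x => (S x).coe_nonneg
  have hSle : ∀ (t : Fin n), t ≠ b0 → ∀ x, W t x ≤ (S x : ℝ) := by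
    intro t ht x
    have h1 : Real.toNNReal (W t x) ≤ S x :=
      Finset.le_sup (f := fun t => Real.toNNReal (W t x))
        (Finset.mem_erase.mpr ⟨ht, Finset.mem_univ t⟩)
    calc W t x = ((Real.toNNReal (W t x) : NNReal) : ℝ) := (Real.coe_toNNReal _ (hW t x)).symm
      _ ≤ (S x : ℝ) := by exact_mod_cast h1
  have hSlb : ∀ x y : Fin 4, x ≠ y → W b0 x = v {x} → v {x} + (S y : ℝ) ≤ v {x, y} := by
    intro x y hxy hWx
    rcases Finset.eq_empty_or_nonempty (Finset.univ.erase b0) with he | hne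
    · have hSy : S y = 0 := by rw [hS]; simp [he]
      rw [hSy]
      simpa using hmono x y
    · obtain ⟨t, htmem, hts⟩ := Finset.exists_mem_eq_sup _ hne (fun t => Real.toNNReal (W t y))
      have htne : t ≠ b0 := (Finset.mem_erase.mp htmem).1
      have hSy : (S y : ℝ) = W t y := by
        rw [hS]
        simp only []
        rw [hts]
        exact Real.coe_toNNReal _ (hW t y)
      rw [hSy, ← hWx]
      exact hpair_lb b0 t x y (Ne.symm htne) hxy
  -- pair upper bound
  have hub_pair : ∀ x y : Fin 4, x ≠ y →
      v {x, y} ≤ max (v {x} + (S y : ℝ)) (v {y} + (S x : ℝ)) := by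
    intro x y hxy
    obtain ⟨σ, h1, h2, h3⟩ := (hA {x, y}).1
    have hmemxy : ∀ t z, σ t = some z → z = x ∨ z = y := by
      intro t z h
      have := h1 t z h
      simpa using this
    by_cases hx : ∃ t, σ t = some x <;> by_cases hy : ∃ t, σ t = some y
    · obtain ⟨tx, htx⟩ := hx
      obtain ⟨ty, hty⟩ := hy
      have htxy : tx ≠ ty := by
        intro h
        rw [h] at htx
        have : some x = some y := htx.symm.trans hty
        exact hxy (by injection this)
      have hz : ∀ t, t ≠ tx → t ≠ ty → σ t = none := by
        intro t h1t h2t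
        cases hσt : σ t with
        | none => rfl
        | some z =>
          rcases hmemxy t z hσt with hzx | hzy
          · exact absurd (h2 t tx x (hzx ▸ hσt) htx) h1t
          · exact absurd (h2 t ty y (hzy ▸ hσt) hty) h2t
      have hsum : v {x, y} = W tx x + W ty y := by
        rw [h3, sum_support_pair _ tx ty htxy (fun t h1t h2t => by rw [hz t h1t h2t]; rfl),
          htx, hty]
        simp
      by_cases htx0 : tx = b0
      · refine le_trans ?_ (le_max_left _ _)
        have hty0 : ty ≠ b0 := fun h => htxy (htx0.trans h.symm)
        have e1 : W tx x ≤ v {x} := hsingle_ub tx x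
        have e2 : W ty y ≤ (S y : ℝ) := hSle ty hty0 y
        linarith
      · refine le_trans ?_ (le_max_right _ _)
        have e1 : W tx x ≤ (S x : ℝ) := hSle tx htx0 x
        have e2 : W ty y ≤ v {y} := hsingle_ub ty y
        linarith
    · obtain ⟨tx, htx⟩ := hx
      push_neg at hy
      have hz : ∀ t, t ≠ tx → σ t = none := by
        intro t ht
        cases hσt : σ t with
        | none => rfl
        | some z =>
          rcases hmemxy t z hσt with hzx | hzy
          · exact absurd (h2 t tx x (hzx ▸ hσt) htx) ht
          · exact absurd (hzy ▸ hσt) (hy t)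
      have hsum : v {x, y} = W tx x := by
        rw [h3, sum_support_single _ tx (fun t ht => by rw [hz t ht]; rfl), htx]
        simp
      refine le_trans ?_ (le_max_left _ _)
      have e1 : W tx x ≤ v {x} := hsingle_ub tx x
      linarith [hS0 y]
    · obtain ⟨ty, hty⟩ := hy
      push_neg at hx
      have hz : ∀ t, t ≠ ty → σ t = none := by
        intro t ht
        cases hσt : σ t with
        | none => rfl
        | some z =>
          rcases hmemxy t z hσt with hzx | hzy
          · exact absurd (hzx ▸ hσt) (hx t)
          · exact absurd (h2 t ty y (hzy ▸ hσt) hty) ht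
      have hsum : v {x, y} = W ty y := by
        rw [h3, sum_support_single _ ty (fun t ht => by rw [hz t ht]; rfl), hty]
        simp
      refine le_trans ?_ (le_max_right _ _)
      have e1 : W ty y ≤ v {y} := hsingle_ub ty y
      linarith [hS0 x]
    · push_neg at hx hy
      have hz : ∀ t, σ t = none := by
        intro t
        cases hσt : σ t with
        | none => rfl
        | some z =>
          rcases hmemxy t z hσt with hzx | hzy
          · exact absurd (hzx ▸ hσt) (hx t)
          · exact absurd (hzy ▸ hσt) (hy t)
      have hsum : v {x, y} = 0 := by rw [h3]; simp [hz]
      refine le_trans ?_ (le_max_left _ _)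
      rw [hsum]
      linarith [hS0 y, h0le {x}]
  -- exact pair values
  have hpairval : ∀ x y : Fin 4, x ≠ y → W b0 x = v {x} → W b0 y = v {y} →
      v {x, y} = max (v {x} + (S y : ℝ)) (v {y} + (S x : ℝ)) := by
    intro x y hxy hWx hWy
    refine le_antisymm (hub_pair x y hxy) (max_le (hSlb x y hxy hWx) ?_)
    rw [Finset.pair_comm]
    exact hSlb y x (Ne.symm hxy) hWy
  -- compute the six deltas
  have eij : min (v {j} - (S j : ℝ)) (v {i} - (S i : ℝ)) = a := by
    rw [← minmax (v {i}) (S i : ℝ) (v {j}) (S j : ℝ), ← hpairval i j hij hWi hWj]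
    exact hdij
  have ejk : min (v {k} - (S k : ℝ)) (v {j} - (S j : ℝ)) = a := by
    rw [← minmax (v {j}) (S j : ℝ) (v {k}) (S k : ℝ), ← hpairval j k hjk hWj hWk]
    exact hdjk
  have ekl : min (v {l} - (S l : ℝ)) (v {k} - (S k : ℝ)) = a := by
    rw [← minmax (v {k}) (S k : ℝ) (v {l}) (S l : ℝ), ← hpairval k l hkl hWk hWl]
    exact hdkl
  have eil : min (v {l} - (S l : ℝ)) (v {i} - (S i : ℝ)) = a := by
    rw [← minmax (v {i}) (S i : ℝ) (v {l}) (S l : ℝ), ← hpairval i l hil hWi hWl]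
    exact hdil
  have eik : min (v {k} - (S k : ℝ)) (v {i} - (S i : ℝ)) = b := by
    rw [← minmax (v {i}) (S i : ℝ) (v {k}) (S k : ℝ), ← hpairval i k hik hWi hWk]
    exact hdik
  have ejl : min (v {l} - (S l : ℝ)) (v {j} - (S j : ℝ)) = c := by
    rw [← minmax (v {j}) (S j : ℝ) (v {l}) (S l : ℝ), ← hpairval j l hjl hWj hWl]
    exact hdjl
  -- final arithmetic contradiction
  have hdi : a < v {i} - (S i : ℝ) := by
    linarith [min_le_right (v {k} - (S k : ℝ)) (v {i} - (S i : ℝ))]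
  have hdk : a < v {k} - (S k : ℝ) := by
    linarith [min_le_left (v {k} - (S k : ℝ)) (v {i} - (S i : ℝ))]
  have hdj : v {j} - (S j : ℝ) = a := by
    rcases min_cases (v {j} - (S j : ℝ)) (v {i} - (S i : ℝ)) with ⟨h1, h2⟩ | ⟨h1, h2⟩
    · exact h1.symm.trans eij
    · linarith [h1.symm.trans eij]
  have hdl : v {l} - (S l : ℝ) = a := by
    rcases min_cases (v {l} - (S l : ℝ)) (v {k} - (S k : ℝ)) with ⟨h1, h2⟩ | ⟨h1, h2⟩
    · exact h1.symm.trans ekl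
    · linarith [h1.symm.trans ekl]
  rw [hdj, hdl, min_self] at ejl
  linarith
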